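/- arXiv:2111.15538 — 2 statements merged into one kernel-verified Lean document; each statement's English description precedes it below -/
import Mathlib

section
/- The Jacobi triple product identity: for 0 < u < 1 and z ≠ 0, Σ_{c ∈ ℤ} z^c u^{c²/2} = (u;u)_∞ · (-√u z; u)_∞ · (-√u / z; u)_∞, where (x;u)_∞ = Π_{i≥0}(1 - x u^i). -/
set_option maxHeartbeats 1000000
open Finset

/-- Triangular numbers `tri n = n(n-1)/2`. -/
def jtpTri : ℕ → ℕ
  | 0 => 0
  | n + 1 => jtpTri n + n

/-- Gaussian binomial coefficients via the q-Pascal recurrence. -/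
def jtpGb {R : Type*} [CommRing R] (Q : R) : ℕ → ℕ → R
  | 0, 0 => 1
  | 0, _ + 1 => 0
  | _ + 1, 0 => 1
  | n + 1, k + 1 => jtpGb Q n (k + 1) + Q ^ (n - k) * jtpGb Q n k

variable {R : Type*} [CommRing R] (Q : R)

lemma jtpGb_zero_right (n : ℕ) : jtpGb Q n 0 = 1 := by cases n <;> rfl

lemma jtpGb_eq_zero : ∀ {n k : ℕ}, n < k → jtpGb Q n k = 0 := by
  intro n
  induction n with
  | zero => intro k h
            match k, h with
            | k + 1, _ => rfl
  | succ n ih =>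
    intro k h
    match k, h with
    | k + 1, h =>
      simp [jtpGb, ih (show n < k + 1 by omega), ih (show n < k by omega)]

/-- Gauss's q-binomial theorem (finite form). -/
theorem jtpGauss (x : R) (n : ℕ) :
    ∏ k ∈ range n, (1 + x * Q ^ k) =
      ∑ j ∈ range (n + 1), Q ^ jtpTri j * jtpGb Q n j * x ^ j := by
  induction n with
  | zero => simp [jtpGb, jtpTri]
  | succ n ih =>
    rw [Finset.prod_range_succ, ih]
    rw [Finset.sum_range_succ' (fun j => Q ^ jtpTri j * jtpGb Q (n+1) j * x ^ j) (n+1)]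
    have key : ∀ i ∈ range (n+1),
        Q ^ jtpTri (i+1) * jtpGb Q (n+1) (i+1) * x ^ (i+1)
          = Q ^ jtpTri (i+1) * jtpGb Q n (i+1) * x ^ (i+1)
            + (Q ^ jtpTri i * jtpGb Q n i * x ^ i) * (x * Q ^ n) := by
      intro i hi
      have hin : i ≤ n := Nat.lt_succ_iff.mp (mem_range.mp hi)
      have hr : jtpGb Q (n+1) (i+1) = jtpGb Q n (i+1) + Q ^ (n - i) * jtpGb Q n i := rfl
      have hexp : jtpTri (i+1) + (n - i) = jtpTri i + n := by
        simp only [jtpTri]; omega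
      have hpow : Q ^ jtpTri (i+1) * Q ^ (n-i) = Q ^ jtpTri i * Q ^ n := by
        rw [← pow_add, ← pow_add, hexp]
      rw [hr]
      linear_combination (jtpGb Q n i * x ^ (i+1)) * hpow
    rw [Finset.sum_congr rfl key, Finset.sum_add_distrib]
    have h1 : ∑ i ∈ range (n+1), Q ^ jtpTri (i+1) * jtpGb Q n (i+1) * x ^ (i+1)
          + Q ^ jtpTri 0 * jtpGb Q (n+1) 0 * x ^ 0
        = ∑ j ∈ range (n+1), Q ^ jtpTri j * jtpGb Q n j * x ^ j := by
      have e := (Finset.sum_range_succ' (fun j => Q ^ jtpTri j * jtpGb Q n j * x ^ j) (n+1)).symm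
      simp only [jtpGb_zero_right] at e ⊢
      rw [e, Finset.sum_range_succ]
      simp [jtpGb_eq_zero Q (Nat.lt_succ_self n)]
    have h2 : ∑ i ∈ range (n+1), (Q ^ jtpTri i * jtpGb Q n i * x ^ i) * (x * Q ^ n)
        = (∑ j ∈ range (n+1), Q ^ jtpTri j * jtpGb Q n j * x ^ j) * (x * Q ^ n) := by
      rw [Finset.sum_mul]
    rw [add_right_comm, h1, h2]
    ring

/-- Closed form: `gb(m+k, k) * ∏_{i<k}(1-Q^{i+1}) = ∏_{i<k}(1-Q^{m+i+1})`. -/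
theorem jtpGb_closed : ∀ m k : ℕ,
    jtpGb Q (m + k) k * ∏ i ∈ range k, (1 - Q ^ (i + 1))
      = ∏ i ∈ range k, (1 - Q ^ (m + i + 1)) := by
  intro m
  induction m with
  | zero =>
    intro k
    have hself : ∀ j : ℕ, jtpGb Q j j = (1 : R) := by
      intro j
      induction j with
      | zero => rfl
      | succ j ihj =>
        show jtpGb Q j (j+1) + Q ^ (j - j) * jtpGb Q j j = 1
        simp [jtpGb_eq_zero Q (Nat.lt_succ_self j), ihj]
    rw [Nat.zero_add, hself]
    simp
  | succ m ihm =>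
    intro k
    induction k with
    | zero => simp [jtpGb_zero_right]
    | succ k ihk =>
      have hrec : jtpGb Q (m + 1 + (k + 1)) (k + 1)
          = jtpGb Q (m + (k + 1)) (k + 1) + Q ^ (m + 1) * jtpGb Q (m + 1 + k) k := by
        rw [show m + 1 + (k+1) = (m + k + 1) + 1 by omega,
          show m + (k+1) = m + k + 1 by omega, show m + 1 + k = m + k + 1 by omega]
        show jtpGb Q (m+k+1) (k+1) + Q ^ (m+k+1-k) * jtpGb Q (m+k+1) k = _
        rw [show m+k+1-k = m+1 by omega]
      have e1 := ihm (k + 1)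
      have e2 := ihk
      set P := ∏ i ∈ range k, (1 - Q ^ (m + 1 + i + 1)) with hP
      have hD : ∏ i ∈ range (k+1), (1 - Q^(i+1))
          = (∏ i ∈ range k, (1-Q^(i+1))) * (1-Q^(k+1)) := Finset.prod_range_succ _ _
      have hsplit : ∏ i ∈ range (k+1), (1 - Q^(m+i+1)) = (1-Q^(m+1)) * P := by
        rw [Finset.prod_range_succ' (fun i => 1 - Q^(m+i+1)) k, hP]
        rw [Finset.prod_congr rfl (fun i _ => by
          rw [show m+(i+1)+1 = m+1+i+1 from by omega] :
            ∀ i ∈ range k, 1 - Q^(m+(i+1)+1) = 1 - Q^(m+1+i+1))]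
        rw [show m + 0 + 1 = m + 1 from by omega, mul_comm]
      have htop : ∏ i ∈ range (k+1), (1-Q^(m+1+i+1)) = P * (1-Q^(m+1+k+1)) :=
        Finset.prod_range_succ _ _
      rw [hrec, htop, hD]
      rw [hD, hsplit] at e1
      have hp : Q^(m+1) * Q^(k+1) = Q^(m+1+k+1) := by
        ring
      linear_combination e1 + (Q^(m+1)*(1-Q^(k+1))) * e2 - P * hp

lemma jtp_zpow_sum {a : ℂ} (ha : a ≠ 0) (n : ℕ) (g : ℕ → ℤ) :
    a ^ (∑ b ∈ range n, g b) = ∏ b ∈ range n, a ^ g b := by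
  induction n with
  | zero => simp
  | succ n ih => rw [Finset.sum_range_succ, Finset.prod_range_succ, zpow_add₀ ha, ih]

lemma jtp_sum_odd (n : ℕ) : ∑ k ∈ range n, (2 * (k : ℤ) + 1) = (n : ℤ) ^ 2 := by
  induction n with
  | zero => simp
  | succ n ih => rw [Finset.sum_range_succ, ih]; push_cast; ring

lemma jtp_tri_cast (j : ℕ) : (2 * jtpTri j : ℤ) = (j : ℤ) ^ 2 - j := by
  induction j with
  | zero => simp [jtpTri]
  | succ j ih =>
    have : jtpTri (j + 1) = jtpTri j + j := rfl
    rw [this]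
    push_cast at ih ⊢
    linarith [ih]

/-- The finite symmetric (Cauchy) identity. -/
lemma jtpFin (q : ℝ) (hq : (q : ℂ) ≠ 0) (z : ℂ) (hz : z ≠ 0) (n : ℕ) :
    (∏ m ∈ range n, (1 + z * (q : ℂ) ^ (2 * m + 1))) *
        (∏ m ∈ range n, (1 + ((q : ℂ) ^ (2 * m + 1)) / z))
      = ∑ j ∈ range (2 * n + 1),
          jtpGb ((q : ℂ) ^ 2) (2 * n) j * z ^ ((j : ℤ) - n) * (q : ℂ) ^ (((j : ℤ) - n) ^ 2) := by
  set qC : ℂ := (q : ℂ) with hqC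
  have gauss := jtpGauss (qC ^ 2) (z * qC ^ (1 - 2 * (n : ℤ))) (2 * n)
  have fac : ∀ k : ℕ, 1 + (z * qC ^ (1 - 2 * (n : ℤ))) * ((qC ^ 2) ^ k)
      = 1 + z * qC ^ (2 * (k : ℤ) + 1 - 2 * n) := by
    intro k
    congr 1
    rw [mul_assoc]
    congr 1
    rw [← pow_mul, ← zpow_natCast qC (2 * k), ← zpow_add₀ hq]
    congr 1
    push_cast
    ring
  rw [Finset.prod_congr rfl (fun k _ => fac k)] at gauss
  -- split the product over `range (2n)`
  have hsplit : ∏ k ∈ range (2 * n), (1 + z * qC ^ (2 * (k : ℤ) + 1 - 2 * n))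
      = (∏ k ∈ range n, (1 + z * qC ^ (2 * (k : ℤ) + 1 - 2 * n))) *
        ∏ k ∈ range n, (1 + z * qC ^ (2 * ((n + k : ℕ) : ℤ) + 1 - 2 * n)) := by
    rw [two_mul, Finset.prod_range_add]
  have hupper : ∀ k : ℕ, 1 + z * qC ^ (2 * ((n + k : ℕ) : ℤ) + 1 - 2 * n)
      = 1 + z * qC ^ (2 * k + 1) := by
    intro k
    congr 1
    rw [show (2 * ((n + k : ℕ) : ℤ) + 1 - 2 * n) = ((2 * k + 1 : ℕ) : ℤ) by push_cast; ring,
      zpow_natCast]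
  have hZcancel : ∀ k : ℕ, qC ^ (2 * (k : ℤ) + 1 - 2 * n) * qC ^ (2 * (n : ℤ) - 2 * k - 1)
      = 1 := by
    intro k
    rw [← zpow_add₀ hq, show (2 * (k : ℤ) + 1 - 2 * n) + (2 * (n : ℤ) - 2 * k - 1) = 0 by ring,
      zpow_zero]
  have hFk : ∀ k : ℕ, (1 + z * qC ^ (2 * (k : ℤ) + 1 - 2 * n))
      = (z * qC ^ (2 * (k : ℤ) + 1 - 2 * n)) * (1 + qC ^ (2 * (n : ℤ) - 2 * k - 1) / z) := by
    intro k
    have h := hZcancel k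
    field_simp
    linear_combination -h
  have hlowprod : ∏ k ∈ range n, (1 + z * qC ^ (2 * (k : ℤ) + 1 - 2 * n))
      = (z ^ n * qC ^ (-(n : ℤ) ^ 2)) * ∏ k ∈ range n, (1 + qC ^ (2 * k + 1) / z) := by
    rw [Finset.prod_congr rfl (fun k _ => hFk k), Finset.prod_mul_distrib,
      Finset.prod_mul_distrib, Finset.prod_const]
    have h1 : ∏ k ∈ range n, qC ^ (2 * (k : ℤ) + 1 - 2 * n) = qC ^ (-(n : ℤ) ^ 2) := by
      rw [← jtp_zpow_sum hq]
      congr 1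
      rw [Finset.sum_sub_distrib, jtp_sum_odd, Finset.sum_const]
      simp only [card_range, nsmul_eq_mul]
      ring
    have h2 : ∏ k ∈ range n, (1 + qC ^ (2 * (n : ℤ) - 2 * (k : ℤ) - 1) / z)
        = ∏ k ∈ range n, (1 + qC ^ (2 * k + 1) / z) := by
      rw [← Finset.prod_range_reflect (fun j => 1 + qC ^ (2 * j + 1) / z) n]
      refine Finset.prod_congr rfl fun k hk => ?_
      have hkn : k < n := mem_range.mp hk
      congr 2
      rw [show (2 * (n : ℤ) - 2 * (k : ℤ) - 1) = ((2 * (n - 1 - k) + 1 : ℕ) : ℤ) by omega,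
        zpow_natCast]
    rw [h1, h2, Finset.card_range]
  set Zc : ℂ := z ^ n * qC ^ (-(n : ℤ) ^ 2) with hZc
  have hZne : Zc ≠ 0 := mul_ne_zero (pow_ne_zero _ hz) (zpow_ne_zero _ hq)
  have hL : ∏ k ∈ range (2 * n), (1 + z * qC ^ (2 * (k : ℤ) + 1 - 2 * n))
      = Zc * ((∏ m ∈ range n, (1 + z * qC ^ (2 * m + 1))) *
          ∏ m ∈ range n, (1 + qC ^ (2 * m + 1) / z)) := by
    rw [hsplit, Finset.prod_congr rfl (fun k _ => hupper k), hlowprod]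
    ring
  have hterm : ∀ j ∈ range (2 * n + 1),
      (qC ^ 2) ^ jtpTri j * jtpGb (qC ^ 2) (2 * n) j * (z * qC ^ (1 - 2 * (n : ℤ))) ^ j
        = Zc * (jtpGb (qC ^ 2) (2 * n) j * z ^ ((j : ℤ) - n) * qC ^ (((j : ℤ) - n) ^ 2)) := by
    intro j hj
    have e1 : (qC ^ 2) ^ jtpTri j * (z * qC ^ (1 - 2 * (n : ℤ))) ^ j
        = z ^ (j : ℤ) * qC ^ ((j : ℤ) ^ 2 - 2 * n * j) := by
      rw [mul_pow, ← pow_mul, ← zpow_natCast qC (2 * jtpTri j),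
        ← zpow_natCast (qC ^ (1 - 2 * (n : ℤ))) j, ← zpow_mul, ← zpow_natCast z j,
        mul_left_comm, ← mul_assoc, mul_assoc, ← zpow_add₀ hq]
      congr 2
      push_cast
      linear_combination jtp_tri_cast j
    have e2 : z ^ ((j : ℤ) - n) * qC ^ (((j : ℤ) - n) ^ 2) * Zc
        = z ^ (j : ℤ) * qC ^ ((j : ℤ) ^ 2 - 2 * n * j) := by
      rw [hZc, ← zpow_natCast z n, mul_mul_mul_comm, ← zpow_add₀ hz, ← zpow_add₀ hq]
      congr 2 <;> ring
    linear_combination jtpGb (qC ^ 2) (2 * n) j * e1 - jtpGb (qC ^ 2) (2 * n) j * e2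
  rw [Finset.sum_congr rfl hterm, ← Finset.mul_sum, hL] at gauss
  have := mul_left_cancel₀ hZne gauss
  exact this

open Filter Topology

/-- `gb` commutes with ring homomorphisms. -/
lemma jtpGb_map {R S : Type*} [CommRing R] [CommRing S] (f : R →+* S) (Q : R) :
    ∀ n k : ℕ, f (jtpGb Q n k) = jtpGb (f Q) n k := by
  intro n
  induction n with
  | zero => intro k
            match k with
            | 0 => simp [jtpGb]
            | k + 1 => simp [jtpGb]
  | succ n ih =>
    intro k
    match k with
    | 0 => simp [jtpGb]
    | k + 1 =>
      show f (jtpGb Q n (k+1) + Q ^ (n-k) * jtpGb Q n k) = _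
      rw [map_add, map_mul, map_pow, ih, ih]
      rfl

/-- Infinite products `∏ (1 + c tⁱ)` converge. -/
lemma jtp_multipliable_geo (c : ℂ) {t : ℝ} (h0 : 0 ≤ t) (h1 : t < 1) :
    Multipliable (fun i : ℕ => 1 + c * (t : ℂ) ^ i) := by
  by_cases hzero : ∃ i, (1 + c * (t : ℂ) ^ i) = 0
  · obtain ⟨i₀, h₀⟩ := hzero
    refine ⟨0, ?_⟩
    have hev : ∀ᶠ s : Finset ℕ in atTop, ∏ b ∈ s, (1 + c * (t : ℂ) ^ b) = 0 :=
      eventually_atTop.2 ⟨{i₀}, fun s hs =>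
        Finset.prod_eq_zero (hs (Finset.mem_singleton_self i₀)) h₀⟩
    exact Tendsto.congr' (hev.mono fun s hs => hs.symm) tendsto_const_nhds
  · push_neg at hzero
    have hnorm : ∀ i : ℕ, ‖c * (t : ℂ) ^ i‖ = ‖c‖ * t ^ i := by
      intro i
      rw [norm_mul, norm_pow, Complex.norm_real, Real.norm_eq_abs, abs_of_nonneg h0]
    have hsum : Summable (fun i : ℕ => Complex.log (1 + c * (t : ℂ) ^ i)) := by
      refine Summable.of_norm_bounded_eventually_nat (g := fun i => 3/2 * (‖c‖ * t ^ i)) ?_ ?_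
      · simpa [mul_assoc] using (summable_geometric_of_lt_one h0 h1).mul_left (3/2 * ‖c‖)
      · have htend : Tendsto (fun i : ℕ => ‖c‖ * t ^ i) atTop (𝓝 0) := by
          simpa using (tendsto_pow_atTop_nhds_zero_of_lt_one h0 h1).const_mul ‖c‖
        filter_upwards [htend.eventually_le_const (by norm_num : (0:ℝ) < 1/2)] with i hi
        rw [← hnorm i] at hi ⊢
        exact Complex.norm_log_one_add_half_le_self hi
    exact Complex.multipliable_of_summable_log hsum

noncomputable def jtpD (u : ℝ) (n : ℕ) : ℝ := ∏ i ∈ range n, (1 - u ^ (i + 1))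

noncomputable def jtpDinf (u : ℝ) : ℝ := ∏' i : ℕ, (1 - u ^ (i + 1))

section Dlims

variable {u : ℝ} (hu0 : 0 < u) (hu1 : u < 1)
include hu0 hu1

lemma jtp_factor_pos (i : ℕ) : 0 < 1 - u ^ (i + 1) := by
  have : u ^ (i + 1) < 1 := pow_lt_one₀ hu0.le hu1 (Nat.succ_ne_zero i)
  linarith

lemma jtp_logsummable : Summable (fun i : ℕ => Real.log (1 - u ^ (i + 1))) := by
  apply Summable.of_norm_bounded (g := fun i : ℕ => (1 - u)⁻¹ * u ^ (i + 1))
  · have h := (summable_geometric_of_lt_one hu0.le hu1).mul_left ((1 - u)⁻¹ * u)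
    apply h.congr
    intro i
    rw [pow_succ]
    ring
  · intro i
    set a := u ^ (i + 1) with ha
    have ha0 : 0 < a := pow_pos hu0 _
    have hau : a ≤ u := pow_le_of_le_one hu0.le hu1.le (Nat.succ_ne_zero i)
    have h1a : 0 < 1 - a := jtp_factor_pos hu0 hu1 i
    have hlog : Real.log (1 - a) ≤ 0 := Real.log_nonpos (by linarith) (by linarith)
    rw [Real.norm_eq_abs, abs_of_nonpos hlog]
    have h2 : -Real.log (1 - a) = Real.log (1 - a)⁻¹ := (Real.log_inv _).symm
    have h3 : Real.log (1 - a)⁻¹ ≤ (1 - a)⁻¹ - 1 :=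
      Real.log_le_sub_one_of_pos (inv_pos.2 h1a)
    have h4 : (1 - a)⁻¹ - 1 = a * (1 - a)⁻¹ := by field_simp; ring
    have h5 : (1 - a)⁻¹ ≤ (1 - u)⁻¹ := by
      apply inv_anti₀ (by linarith) (by linarith)
    calc -Real.log (1 - a) ≤ a * (1 - a)⁻¹ := by rw [h2]; linarith [h3, h4.symm.le]
      _ ≤ a * (1 - u)⁻¹ := by nlinarith
      _ = (1 - u)⁻¹ * a := by ring

lemma jtp_hasProdD : HasProd (fun i : ℕ => 1 - u ^ (i + 1)) (jtpDinf u) :=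
  (Real.multipliable_of_summable_log (fun i => jtp_factor_pos hu0 hu1 i)
    (jtp_logsummable hu0 hu1)).hasProd

lemma jtp_Dinf_pos : 0 < jtpDinf u := by
  have h := Real.rexp_tsum_eq_tprod (fun i => jtp_factor_pos hu0 hu1 i)
    (jtp_logsummable hu0 hu1)
  rw [jtpDinf, ← h]
  exact Real.exp_pos _

lemma jtp_tendstoD : Tendsto (jtpD u) atTop (𝓝 (jtpDinf u)) :=
  (jtp_hasProdD hu0 hu1).tendsto_prod_nat

lemma jtp_D_pos (n : ℕ) : 0 < jtpD u n :=
  Finset.prod_pos fun i _ => jtp_factor_pos hu0 hu1 i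

lemma jtp_D_le_one (n : ℕ) : jtpD u n ≤ 1 :=
  Finset.prod_le_one (fun i _ => (jtp_factor_pos hu0 hu1 i).le)
    (fun i _ => by have := pow_pos hu0 (i + 1); linarith)

lemma jtp_D_anti : Antitone (jtpD u) := by
  apply antitone_nat_of_succ_le
  intro n
  rw [jtpD, Finset.prod_range_succ]
  exact mul_le_of_le_one_right (jtp_D_pos hu0 hu1 n).le
    (by have := pow_pos hu0 (n + 1); linarith)

lemma jtp_Dinf_le (n : ℕ) : jtpDinf u ≤ jtpD u n :=
  le_of_tendsto (jtp_tendstoD hu0 hu1)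
    (eventually_atTop.2 ⟨n, fun m hm => jtp_D_anti hu0 hu1 hm⟩)

lemma jtp_gb_formula (m k : ℕ) :
    jtpGb u (m + k) k = jtpD u (m + k) / (jtpD u m * jtpD u k) := by
  have h := jtpGb_closed u m k
  have h2 : jtpD u (m + k) = jtpD u m * ∏ i ∈ range k, (1 - u ^ (m + i + 1)) := by
    simp only [jtpD]
    rw [Finset.prod_range_add]
  rw [eq_div_iff (ne_of_gt (mul_pos (jtp_D_pos hu0 hu1 m) (jtp_D_pos hu0 hu1 k)))]
  have hDk : jtpD u k = ∏ i ∈ range k, (1 - u ^ (i + 1)) := rfl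
  linear_combination (jtpGb u (m + k) k * jtpD u m) * hDk + jtpD u m * h - h2

lemma jtp_gb_nonneg (m k : ℕ) : 0 ≤ jtpGb u (m + k) k := by
  rw [jtp_gb_formula hu0 hu1]
  exact div_nonneg (jtp_D_pos hu0 hu1 _).le
    (mul_pos (jtp_D_pos hu0 hu1 m) (jtp_D_pos hu0 hu1 k)).le

lemma jtp_gb_le (m k : ℕ) : jtpGb u (m + k) k ≤ (jtpDinf u)⁻¹ * (jtpDinf u)⁻¹ := by
  rw [jtp_gb_formula hu0 hu1]
  have hDipos := jtp_Dinf_pos hu0 hu1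
  have h1 : jtpD u (m + k) ≤ 1 := jtp_D_le_one hu0 hu1 _
  have h2 : jtpDinf u * jtpDinf u ≤ jtpD u m * jtpD u k :=
    mul_le_mul (jtp_Dinf_le hu0 hu1 m) (jtp_Dinf_le hu0 hu1 k) hDipos.le
      (jtp_D_pos hu0 hu1 m).le
  calc jtpD u (m + k) / (jtpD u m * jtpD u k)
      ≤ 1 / (jtpDinf u * jtpDinf u) :=
        div_le_div₀ zero_le_one h1 (mul_pos hDipos hDipos) h2
    _ = (jtpDinf u)⁻¹ * (jtpDinf u)⁻¹ := by rw [one_div, mul_inv]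

lemma jtp_gb_tendsto (c : ℤ) :
    Tendsto (fun n : ℕ => jtpGb u (2 * n) (((n : ℤ) + c).toNat)) atTop
      (𝓝 (jtpDinf u)⁻¹) := by
  have hDipos := jtp_Dinf_pos hu0 hu1
  have hm : Tendsto (fun n : ℕ => ((n : ℤ) - c).toNat) atTop atTop :=
    tendsto_atTop.2 fun b => eventually_atTop.2 ⟨b + c.natAbs, fun n hn => by omega⟩
  have hk : Tendsto (fun n : ℕ => ((n : ℤ) + c).toNat) atTop atTop :=
    tendsto_atTop.2 fun b => eventually_atTop.2 ⟨b + c.natAbs, fun n hn => by omega⟩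
  have h2n : Tendsto (fun n : ℕ => 2 * n) atTop atTop :=
    tendsto_atTop.2 fun b => eventually_atTop.2 ⟨b, fun n hn => by omega⟩
  have hmain : Tendsto (fun n : ℕ =>
      jtpD u (2 * n) / (jtpD u (((n : ℤ) - c).toNat) * jtpD u (((n : ℤ) + c).toNat)))
      atTop (𝓝 (jtpDinf u / (jtpDinf u * jtpDinf u))) :=
    Tendsto.div ((jtp_tendstoD hu0 hu1).comp h2n)
      (((jtp_tendstoD hu0 hu1).comp hm).mul ((jtp_tendstoD hu0 hu1).comp hk))
      (ne_of_gt (mul_pos hDipos hDipos))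
  have heq : jtpDinf u / (jtpDinf u * jtpDinf u) = (jtpDinf u)⁻¹ := by
    field_simp
  rw [heq] at hmain
  apply Tendsto.congr' ?_ hmain
  filter_upwards [eventually_atTop.2 ⟨c.natAbs, fun n hn => hn⟩] with n hn
  have hmk : ((n : ℤ) - c).toNat + ((n : ℤ) + c).toNat = 2 * n := by omega
  rw [← hmk, jtp_gb_formula hu0 hu1]

end Dlims

lemma jtp_summable_aux {t : ℝ} (r : ℝ) (ht0 : 0 < t) (ht1 : t < 1) (hr : 0 < r) :
    Summable (fun a : ℕ => r ^ a * t ^ (a ^ 2)) := by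
  apply summable_of_ratio_test_tendsto_lt_one (l := 0) zero_lt_one
  · exact Filter.Eventually.of_forall fun n => by positivity
  · have hev : ∀ n : ℕ, ‖r ^ (n + 1) * t ^ ((n + 1) ^ 2)‖ / ‖r ^ n * t ^ (n ^ 2)‖
        = (r * t) * (t ^ 2) ^ n := by
      intro n
      rw [Real.norm_eq_abs, Real.norm_eq_abs, abs_of_pos (by positivity),
        abs_of_pos (by positivity), show (n + 1) ^ 2 = n ^ 2 + (2 * n + 1) by ring]
      rw [pow_add t, show t ^ (2 * n + 1) = (t ^ 2) ^ n * t by rw [← pow_mul, ← pow_succ],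
        pow_succ r]
      have h1 : r ^ n ≠ 0 := by positivity
      have h2 : t ^ (n ^ 2) ≠ 0 := by positivity
      field_simp
    have htend : Tendsto (fun n : ℕ => (r * t) * (t ^ 2) ^ n) atTop (𝓝 0) := by
      simpa using (tendsto_pow_atTop_nhds_zero_of_lt_one (by positivity)
        (by nlinarith : t ^ 2 < 1)).const_mul (r * t)
    exact htend.congr fun n => (hev n).symm

lemma jtpMaster (q : ℝ) (hq0 : 0 < q) (hq1 : q < 1) (z : ℂ) (hz : z ≠ 0) :
    ∑' c : ℤ, z ^ c * (q : ℂ) ^ (c ^ 2) =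
      ((jtpDinf (q ^ 2) : ℝ) : ℂ) *
        (∏' i : ℕ, (1 + (q : ℂ) * z * ((q ^ 2 : ℝ) : ℂ) ^ i)) *
        (∏' i : ℕ, (1 + (q : ℂ) / z * ((q ^ 2 : ℝ) : ℂ) ^ i)) := by
  have hu0 : 0 < q ^ 2 := by positivity
  have hu1 : q ^ 2 < 1 := by nlinarith
  set qC : ℂ := (q : ℂ) with hqCdef
  have hqC : qC ≠ 0 := by
    simp only [hqCdef, ne_eq, Complex.ofReal_eq_zero]
    exact hq0.ne'
  have hcast : ((q ^ 2 : ℝ) : ℂ) = qC ^ 2 := by push_cast; ring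
  set fA : ℕ → ℂ := fun i => 1 + qC * z * ((q ^ 2 : ℝ) : ℂ) ^ i with hfA
  set fB : ℕ → ℂ := fun i => 1 + qC / z * ((q ^ 2 : ℝ) : ℂ) ^ i with hfB
  have hmA : Multipliable fA := jtp_multipliable_geo (qC * z) hu0.le hu1
  have hmB : Multipliable fB := jtp_multipliable_geo (qC / z) hu0.le hu1
  have htA : Tendsto (fun n => ∏ m ∈ range n, fA m) atTop (𝓝 (∏' i, fA i)) :=
    hmA.hasProd.tendsto_prod_nat
  have htB : Tendsto (fun n => ∏ m ∈ range n, fB m) atTop (𝓝 (∏' i, fB i)) :=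
    hmB.hasProd.tendsto_prod_nat
  have hAeq : ∀ n : ℕ, ∏ m ∈ range n, fA m = ∏ m ∈ range n, (1 + z * qC ^ (2 * m + 1)) := by
    intro n
    refine Finset.prod_congr rfl fun m _ => ?_
    rw [hfA]
    simp only [hcast]
    ring
  have hBeq : ∀ n : ℕ, ∏ m ∈ range n, fB m = ∏ m ∈ range n, (1 + qC ^ (2 * m + 1) / z) := by
    intro n
    refine Finset.prod_congr rfl fun m _ => ?_
    rw [hfB]
    simp only [hcast]
    ring
  -- the approximating functions
  set g : ℕ → ℤ → ℂ := fun n c =>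
    if c.natAbs ≤ n then
      ((jtpGb (q ^ 2) (2 * n) (((n : ℤ) + c).toNat) : ℝ) : ℂ) * (z ^ c * qC ^ (c ^ 2))
    else 0 with hg
  set L : ℤ → ℂ := fun c => (((jtpDinf (q ^ 2))⁻¹ : ℝ) : ℂ) * (z ^ c * qC ^ (c ^ 2)) with hL
  have hgbcast : ∀ n k : ℕ, ((jtpGb (q ^ 2) n k : ℝ) : ℂ) = jtpGb (qC ^ 2) n k := by
    intro n k
    have := jtpGb_map Complex.ofRealHom (q ^ 2) n k
    simpa [Complex.ofRealHom, hcast] using this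
  -- (i) the tsum of `g n` is the finite product
  have hgsum : ∀ n : ℕ, ∑' c : ℤ, g n c
      = (∏ m ∈ range n, fA m) * ∏ m ∈ range n, fB m := by
    intro n
    rw [hAeq n, hBeq n, jtpFin q hqC z hz n]
    have hsupp : ∀ c : ℤ, c ∉ Finset.Icc (-(n : ℤ)) n → g n c = 0 := by
      intro c hc
      rw [hg]
      simp only [Finset.mem_Icc] at hc
      have : ¬ c.natAbs ≤ n := by omega
      simp [this]
    rw [tsum_eq_sum hsupp]
    refine Finset.sum_nbij' (fun c => ((n : ℤ) + c).toNat) (fun j => (j : ℤ) - n)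
      ?_ ?_ ?_ ?_ ?_
    · intro c hc
      simp only [Finset.mem_Icc] at hc
      simp only [Finset.mem_range]
      omega
    · intro j hj
      simp only [Finset.mem_range] at hj
      simp only [Finset.mem_Icc]
      omega
    · intro c hc
      simp only [Finset.mem_Icc] at hc
      show ((((n : ℤ) + c).toNat : ℤ)) - n = c
      omega
    · intro j hj
      simp only [Finset.mem_range] at hj
      show ((n : ℤ) + ((j : ℤ) - n)).toNat = j
      omega
    · intro c hc
      simp only [Finset.mem_Icc] at hc
      rw [hg]
      have h1 : c.natAbs ≤ n := by omega
      simp only [h1, if_true]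
      rw [hgbcast]
      have h2 : ((((n : ℤ) + c).toNat : ℤ)) = n + c := by omega
      rw [h2, show (n : ℤ) + c - n = c by ring]
      ring
  -- (ii) pointwise limits
  have htends : ∀ c : ℤ, Tendsto (fun n => g n c) atTop (𝓝 (L c)) := by
    intro c
    have hbase := jtp_gb_tendsto hu0 hu1 c
    have hcplx : Tendsto (fun n : ℕ =>
        ((jtpGb (q ^ 2) (2 * n) (((n : ℤ) + c).toNat) : ℝ) : ℂ)) atTop
        (𝓝 (((jtpDinf (q ^ 2))⁻¹ : ℝ) : ℂ)) :=
      (Complex.continuous_ofReal.tendsto _).comp hbase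
    have := hcplx.mul_const (z ^ c * qC ^ (c ^ 2))
    apply Tendsto.congr' ?_ this
    filter_upwards [eventually_atTop.2 ⟨c.natAbs, fun n hn => hn⟩] with n hn
    rw [hg]
    simp only [hn, if_true]
  -- (iii) uniform bound
  set C : ℝ := (jtpDinf (q ^ 2))⁻¹ * (jtpDinf (q ^ 2))⁻¹ with hC
  set bound : ℤ → ℝ := fun c => C * (‖z‖ ^ c * q ^ (c ^ 2)) with hbound
  have hnorm : ∀ c : ℤ, ‖z ^ c * qC ^ (c ^ 2)‖ = ‖z‖ ^ c * q ^ (c ^ 2) := by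
    intro c
    rw [norm_mul, norm_zpow, norm_zpow, hqCdef, Complex.norm_real, Real.norm_eq_abs,
      abs_of_pos hq0]
  have hCpos : 0 < C := by
    have := jtp_Dinf_pos hu0 hu1
    positivity
  have hgb_bound : ∀ n : ℕ, ∀ c : ℤ, ‖g n c‖ ≤ bound c := by
    intro n c
    rw [hg, hbound]
    by_cases hcn : c.natAbs ≤ n
    · simp only [hcn, if_true]
      rw [norm_mul, hnorm, Complex.norm_real, Real.norm_eq_abs]
      have hmk : (((n : ℤ) - c).toNat) + (((n : ℤ) + c).toNat) = 2 * n := by omega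
      have hle : jtpGb (q ^ 2) (2 * n) (((n : ℤ) + c).toNat) ≤ C := by
        rw [hC, ← hmk]
        exact jtp_gb_le hu0 hu1 _ _
      have hnn : 0 ≤ jtpGb (q ^ 2) (2 * n) (((n : ℤ) + c).toNat) := by
        rw [← hmk]
        exact jtp_gb_nonneg hu0 hu1 _ _
      rw [abs_of_nonneg hnn]
      have hz2 : 0 ≤ ‖z‖ ^ c * q ^ (c ^ 2) := by positivity
      exact mul_le_mul_of_nonneg_right hle hz2
    · simp only [hcn, if_false, norm_zero]
      positivity
  -- (iv) summability of the bound
  have hbsum : Summable bound := by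
    rw [hbound]
    apply Summable.mul_left
    apply Summable.of_nat_of_neg
    · apply (jtp_summable_aux ‖z‖ hq0 hq1 (norm_pos_iff.2 hz)).congr
      intro a
      rw [show ((a : ℤ) ^ 2) = ((a ^ 2 : ℕ) : ℤ) by push_cast; ring, zpow_natCast,
        zpow_natCast]
    · apply (jtp_summable_aux ‖z‖⁻¹ hq0 hq1 (inv_pos.2 (norm_pos_iff.2 hz))).congr
      intro a
      rw [show ((-(a : ℤ)) ^ 2) = ((a ^ 2 : ℕ) : ℤ) by push_cast; ring, zpow_neg,
        zpow_natCast, zpow_natCast, inv_pow]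
  -- dominated convergence
  have hdom : Tendsto (fun n => ∑' c : ℤ, g n c) atTop (𝓝 (∑' c : ℤ, L c)) :=
    tendsto_tsum_of_dominated_convergence hbsum htends
      (Filter.Eventually.of_forall hgb_bound)
  have hlim2 : Tendsto (fun n => ∑' c : ℤ, g n c) atTop
      (𝓝 ((∏' i, fA i) * ∏' i, fB i)) := by
    apply (htA.mul htB).congr
    intro n
    exact (hgsum n).symm
  have hfinal : ∑' c : ℤ, L c = (∏' i, fA i) * ∏' i, fB i :=
    tendsto_nhds_unique hdom hlim2
  rw [hL, tsum_mul_left] at hfinal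
  have hDK : ((jtpDinf (q ^ 2) : ℝ) : ℂ) * (((jtpDinf (q ^ 2))⁻¹ : ℝ) : ℂ) = 1 := by
    rw [← Complex.ofReal_mul, mul_inv_cancel₀ (jtp_Dinf_pos hu0 hu1).ne']
    norm_num
  calc ∑' c : ℤ, z ^ c * qC ^ (c ^ 2)
      = ((jtpDinf (q ^ 2) : ℝ) : ℂ) * (((jtpDinf (q ^ 2))⁻¹ : ℝ) : ℂ)
        * ∑' c : ℤ, z ^ c * qC ^ (c ^ 2) := by rw [hDK, one_mul]
    _ = ((jtpDinf (q ^ 2) : ℝ) : ℂ) * (∏' i, fA i) * ∏' i, fB i := by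
        rw [mul_assoc, hfinal]; ring


/-- The Jacobi triple product identity: for `0 < u < 1` and `z ≠ 0`,
`Σ_{c ∈ ℤ} z^c u^{c²/2} = (u;u)_∞ (-√u z; u)_∞ (-√u/z; u)_∞`,
where `u^{c²/2} = (√u)^{c²}` and `(x;u)_∞ = Π_{i≥0}(1 - x uⁱ)`. -/
theorem stmt7 (u : ℝ) (hu0 : 0 < u) (hu1 : u < 1) (z : ℂ) (hz : z ≠ 0) :
    ∑' c : ℤ, z ^ c * ((Real.sqrt u : ℂ)) ^ (c ^ 2) =
      (∏' i : ℕ, (1 - (u : ℂ) ^ (i + 1))) *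
        (∏' i : ℕ, (1 + (Real.sqrt u : ℂ) * z * (u : ℂ) ^ i)) *
        (∏' i : ℕ, (1 + (Real.sqrt u : ℂ) / z * (u : ℂ) ^ i)) := by
  have hq0 : 0 < Real.sqrt u := Real.sqrt_pos.2 hu0
  have hq1 : Real.sqrt u < 1 := by
    rw [show (1 : ℝ) = Real.sqrt 1 by simp]
    exact Real.sqrt_lt_sqrt hu0.le hu1
  have hqu : Real.sqrt u ^ 2 = u := Real.sq_sqrt hu0.le
  have h := jtpMaster (Real.sqrt u) hq0 hq1 z hz
  rw [hqu] at h
  rw [h]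
  have hD : ((jtpDinf u : ℝ) : ℂ) = ∏' i : ℕ, (1 - (u : ℂ) ^ (i + 1)) := by
    have hmult := (jtp_hasProdD hu0 hu1).multipliable
    rw [jtpDinf]
    rw [show ((∏' i : ℕ, (1 - u ^ (i + 1)) : ℝ) : ℂ)
        = Complex.ofRealHom (∏' i : ℕ, (1 - u ^ (i + 1))) from rfl]
    rw [hmult.map_tprod Complex.ofRealHom Complex.continuous_ofReal]
    exact tprod_congr fun i => by simp only [Complex.ofRealHom_eq_coe]; push_cast; ring
  rw [hD]
end

section
/- The Taylor expansion of the action: with S as above (0 < b < 1, c₁ = -2log(1-b)), S(e^{w}) = S(1) + (b/(3(1-b)²)) w³ + O(w⁴) as w → 0. -/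
open Asymptotics Filter

/-- The dilogarithm `Li₂(x) = Σ_{k≥1} x^k / k²`. -/
noncomputable def Li2 (x : ℝ) : ℝ := ∑' k : ℕ, x ^ (k + 1) / ((k + 1 : ℝ) ^ 2)

/-- The action `S(z) = Li₂(bz) - Li₂(b/z) + 2 log(1-b) log z`. -/
noncomputable def action (b z : ℝ) : ℝ :=
  Li2 (b * z) - Li2 (b / z) + 2 * Real.log (1 - b) * Real.log z

lemma exp_taylor4 (x : ℝ) :
    |Real.exp x - (1 + x + x ^ 2 / 2 + x ^ 3 / 6)| ≤ x ^ 4 * Real.exp |x| := by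
  have hs : Summable (fun n : ℕ => x ^ n / (Nat.factorial n : ℝ)) :=
    Real.summable_pow_div_factorial x
  have hexp : Real.exp x = ∑' n : ℕ, x ^ n / (Nat.factorial n : ℝ) := by
    rw [Real.exp_eq_exp_ℝ, NormedSpace.exp_eq_tsum_div]
  have habs : Real.exp |x| = ∑' n : ℕ, |x| ^ n / (Nat.factorial n : ℝ) := by
    rw [Real.exp_eq_exp_ℝ, NormedSpace.exp_eq_tsum_div]
  have key : Real.exp x - (1 + x + x ^ 2 / 2 + x ^ 3 / 6)
      = ∑' n : ℕ, x ^ (n + 4) / (Nat.factorial (n + 4) : ℝ) := by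
    have h := Summable.sum_add_tsum_nat_add (f := fun n : ℕ => x ^ n / (Nat.factorial n : ℝ)) 4 hs
    have hP : ∑ i ∈ Finset.range 4, x ^ i / (Nat.factorial i : ℝ)
        = 1 + x + x ^ 2 / 2 + x ^ 3 / 6 := by
      norm_num [Finset.sum_range_succ, Nat.factorial]
    rw [hexp, ← h, hP]
    ring
  have hterm : ∀ n : ℕ, |x ^ (n + 4) / (Nat.factorial (n + 4) : ℝ)|
      ≤ x ^ 4 * (|x| ^ n / (Nat.factorial n : ℝ)) := by
    intro n
    have h4 : |x| ^ 4 = x ^ 4 := by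
      rw [← abs_pow, abs_of_nonneg (by positivity)]
    rw [abs_div, abs_pow, Nat.abs_cast, pow_add, h4]
    have hrw : x ^ 4 * (|x| ^ n / (Nat.factorial n : ℝ))
        = |x| ^ n * x ^ 4 / (Nat.factorial n : ℝ) := by ring
    rw [hrw]
    gcongr
    omega
  have hs2 : Summable (fun n : ℕ => x ^ 4 * (|x| ^ n / (Nat.factorial n : ℝ))) :=
    (Real.summable_pow_div_factorial |x|).mul_left _
  have hs1 : Summable (fun n : ℕ => |x ^ (n + 4) / (Nat.factorial (n + 4) : ℝ)|) :=
    Summable.of_nonneg_of_le (fun n => abs_nonneg _) hterm hs2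
  have hs1' : Summable (fun n : ℕ => ‖x ^ (n + 4) / (Nat.factorial (n + 4) : ℝ)‖) := by
    simpa only [Real.norm_eq_abs] using hs1
  rw [key]
  calc |∑' n : ℕ, x ^ (n + 4) / (Nat.factorial (n + 4) : ℝ)|
      ≤ ∑' n : ℕ, |x ^ (n + 4) / (Nat.factorial (n + 4) : ℝ)| := by
        simpa only [Real.norm_eq_abs] using norm_tsum_le_tsum_norm hs1'
    _ ≤ ∑' n : ℕ, x ^ 4 * (|x| ^ n / (Nat.factorial n : ℝ)) := Summable.tsum_le_tsum hterm hs1 hs2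
    _ = x ^ 4 * Real.exp |x| := by rw [tsum_mul_left, ← habs]

lemma sinh_taylor (x : ℝ) :
    |Real.exp x - Real.exp (-x) - 2 * x - x ^ 3 / 3| ≤ 2 * x ^ 4 * Real.exp |x| := by
  have h1 := exp_taylor4 x
  have h2 := exp_taylor4 (-x)
  rw [abs_neg] at h2
  have h4 : (-x) ^ 4 = x ^ 4 := by ring
  rw [h4] at h2
  have key : Real.exp x - Real.exp (-x) - 2 * x - x ^ 3 / 3
      = (Real.exp x - (1 + x + x ^ 2 / 2 + x ^ 3 / 6))
        - (Real.exp (-x) - (1 + -x + (-x) ^ 2 / 2 + (-x) ^ 3 / 6)) := by ring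
  rw [key]
  calc |(Real.exp x - (1 + x + x ^ 2 / 2 + x ^ 3 / 6))
        - (Real.exp (-x) - (1 + -x + (-x) ^ 2 / 2 + (-x) ^ 3 / 6))|
      ≤ |Real.exp x - (1 + x + x ^ 2 / 2 + x ^ 3 / 6)|
        + |Real.exp (-x) - (1 + -x + (-x) ^ 2 / 2 + (-x) ^ 3 / 6)| := abs_sub _ _
    _ ≤ x ^ 4 * Real.exp |x| + x ^ 4 * Real.exp |x| := add_le_add h1 h2
    _ = 2 * x ^ 4 * Real.exp |x| := by ring

lemma hasSum_Li2 {x : ℝ} (hx : |x| < 1) :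
    HasSum (fun k : ℕ => x ^ (k + 1) / ((k + 1 : ℝ) ^ 2)) (Li2 x) := by
  have hg : Summable (fun k : ℕ => |x| ^ (k + 1)) := by
    simpa [pow_succ] using (summable_geometric_of_lt_one (abs_nonneg x) hx).mul_right |x|
  have hs : Summable (fun k : ℕ => x ^ (k + 1) / ((k + 1 : ℝ) ^ 2)) := by
    refine Summable.of_norm_bounded hg ?_
    intro k
    have h1 : (1 : ℝ) ≤ ((k : ℝ) + 1) ^ 2 := by
      nlinarith [Nat.cast_nonneg (α := ℝ) k]
    rw [Real.norm_eq_abs, abs_div, abs_pow, abs_of_pos (by positivity : (0:ℝ) < ((k:ℝ)+1)^2)]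
    exact div_le_self (by positivity) h1
  have hL : Li2 x = ∑' k : ℕ, x ^ (k + 1) / ((k + 1 : ℝ) ^ 2) := rfl
  rw [hL]
  exact hs.hasSum

lemma hasSum_shift {b : ℝ} (hb : |b| < 1) :
    HasSum (fun k : ℕ => ((k : ℝ) + 1) * b ^ (k + 1)) (b / (1 - b) ^ 2) := by
  have h := hasSum_coe_mul_geometric_of_norm_lt_one (𝕜 := ℝ) (r := b)
    (by rwa [Real.norm_eq_abs])
  have h2 : HasSum (fun n : ℕ => ((n + 1 : ℕ) : ℝ) * b ^ (n + 1)) (b / (1 - b) ^ 2) :=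
    (hasSum_nat_add_iff (f := fun n : ℕ => (n : ℝ) * b ^ n) 1).2 (by simpa using h)
  simpa [Nat.cast_add, Nat.cast_one] using h2

/-- Auxiliary: the terms of the series for `S(e^w) - S(1) - c w³`. -/
noncomputable def myT (b w : ℝ) (k : ℕ) : ℝ :=
  (b * Real.exp w) ^ (k + 1) / ((k + 1 : ℝ) ^ 2)
    - (b * Real.exp (-w)) ^ (k + 1) / ((k + 1 : ℝ) ^ 2)
    + -2 * w * (b ^ (k + 1) / ((k : ℝ) + 1))
    - w ^ 3 / 3 * (((k : ℝ) + 1) * b ^ (k + 1))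

/-- Taylor expansion of the action at its double critical point: for
`0 < b < 1`, `S(e^w) = S(1) + (b/(3(1-b)²)) w³ + O(w⁴)` as `w → 0`. -/
theorem stmt17 (b : ℝ) (hb0 : 0 < b) (hb1 : b < 1) :
    (fun w : ℝ =>
        action b (Real.exp w) - action b 1 - (b / (3 * (1 - b) ^ 2)) * w ^ 3)
      =O[nhds 0] fun w => w ^ 4 := by
  have hb1' : (0 : ℝ) < 1 - b := by linarith
  set r : ℝ := Real.sqrt b with hr
  have hr0 : 0 < r := Real.sqrt_pos.2 hb0
  have hr1 : r < 1 := by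
    rw [hr, show (1 : ℝ) = Real.sqrt 1 from (Real.sqrt_one).symm]
    exact Real.sqrt_lt_sqrt hb0.le hb1
  have hsq : r ^ 2 = b := Real.sq_sqrt hb0.le
  have hbr : b < r := by nlinarith
  set δ : ℝ := Real.log (r / b) with hδdef
  have hδ : 0 < δ := Real.log_pos (by rw [lt_div_iff₀ hb0]; linarith)
  have habs_b : |b| < 1 := by rw [abs_of_pos hb0]; exact hb1
  -- summability of the comparison series
  have hsum_r : Summable (fun k : ℕ => ((k : ℝ) + 1) ^ 2 * r ^ (k + 1)) := by
    have h := summable_pow_mul_geometric_of_norm_lt_one (R := ℝ) 2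
      (by rw [Real.norm_eq_abs, abs_of_pos hr0]; exact hr1)
    have h2 := (summable_nat_add_iff
      (f := fun n : ℕ => ((n : ℝ)) ^ 2 * r ^ n) 1).2 h
    simpa [Nat.cast_add, Nat.cast_one] using h2
  rw [isBigO_iff]
  refine ⟨2 * ∑' k : ℕ, ((k : ℝ) + 1) ^ 2 * r ^ (k + 1), ?_⟩
  filter_upwards [Metric.ball_mem_nhds (0 : ℝ) hδ] with w hw
  rw [Metric.mem_ball, dist_zero_right, Real.norm_eq_abs] at hw
  have hkey : b * Real.exp |w| ≤ r := by
    have hle : Real.exp |w| ≤ Real.exp δ := Real.exp_le_exp.2 hw.le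
    have hexpδ : Real.exp δ = r / b := Real.exp_log (by positivity)
    calc b * Real.exp |w| ≤ b * (r / b) := by
          rw [← hexpδ]; exact mul_le_mul_of_nonneg_left hle hb0.le
      _ = r := by field_simp
  have haux : ∀ u : ℝ, |u| ≤ |w| → |b * Real.exp u| < 1 := by
    intro u hu
    rw [abs_of_pos (by positivity)]
    calc b * Real.exp u ≤ b * Real.exp |u| :=
          mul_le_mul_of_nonneg_left (Real.exp_le_exp.2 (le_abs_self u)) hb0.le
      _ ≤ b * Real.exp |w| := mul_le_mul_of_nonneg_left (Real.exp_le_exp.2 hu) hb0.le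
      _ ≤ r := hkey
      _ < 1 := hr1
  have h1 := hasSum_Li2 (haux w le_rfl)
  have h2 := hasSum_Li2 (haux (-w) (by rw [abs_neg]))
  have h3 : HasSum (fun k : ℕ => b ^ (k + 1) / ((k : ℝ) + 1)) (-Real.log (1 - b)) :=
    Real.hasSum_pow_div_log_of_abs_lt_one habs_b
  have h4 := hasSum_shift habs_b
  have hT : HasSum (myT b w)
      (Li2 (b * Real.exp w) - Li2 (b * Real.exp (-w))
        + -2 * w * -Real.log (1 - b) - w ^ 3 / 3 * (b / (1 - b) ^ 2)) := by
    have := ((h1.sub h2).add (h3.mul_left (-2 * w))).sub (h4.mul_left (w ^ 3 / 3))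
    convert this using 2 with k
    all_goals rfl
  have hgoal_eq : action b (Real.exp w) - action b 1 - b / (3 * (1 - b) ^ 2) * w ^ 3
      = Li2 (b * Real.exp w) - Li2 (b * Real.exp (-w))
        + -2 * w * -Real.log (1 - b) - w ^ 3 / 3 * (b / (1 - b) ^ 2) := by
    have hne : (1 : ℝ) - b ≠ 0 := by linarith
    simp only [action, Real.log_exp, Real.log_one, mul_one, div_one, Real.exp_neg,
      div_eq_mul_inv]
    field_simp
    ring
  rw [hgoal_eq, ← hT.tsum_eq]
  -- per-term bound
  have hb_term : ∀ k : ℕ,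
      |myT b w k| ≤ (2 * ((k : ℝ) + 1) ^ 2 * r ^ (k + 1)) * w ^ 4 := by
    intro k
    rw [myT]
    set K : ℝ := (k : ℝ) + 1 with hK
    have hK0 : (0 : ℝ) < K := by positivity
    have hKcast : ((k + 1 : ℕ) : ℝ) = K := by push_cast; ring
    have e1 : (b * Real.exp w) ^ (k + 1) = b ^ (k + 1) * Real.exp (K * w) := by
      rw [mul_pow, ← Real.exp_nat_mul]
      congr 2
      push_cast
      ring
    have e2 : (b * Real.exp (-w)) ^ (k + 1) = b ^ (k + 1) * Real.exp (-(K * w)) := by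
      rw [mul_pow, ← Real.exp_nat_mul]
      congr 2
      push_cast
      ring
    have hform : (b * Real.exp w) ^ (k + 1) / ((k + 1 : ℝ) ^ 2)
        - (b * Real.exp (-w)) ^ (k + 1) / ((k + 1 : ℝ) ^ 2)
        + -2 * w * (b ^ (k + 1) / ((k : ℝ) + 1))
        - w ^ 3 / 3 * (((k : ℝ) + 1) * b ^ (k + 1))
        = b ^ (k + 1) / K ^ 2
          * (Real.exp (K * w) - Real.exp (-(K * w)) - 2 * (K * w) - (K * w) ^ 3 / 3) := by
      rw [e1, e2]
      field_simp
      ring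
    have hexpK : Real.exp |K * w| = (Real.exp |w|) ^ (k + 1) := by
      rw [abs_mul, abs_of_pos hK0, ← Real.exp_nat_mul]
      congr 1
      push_cast
      ring
    have hpow : b ^ (k + 1) * Real.exp |K * w| ≤ r ^ (k + 1) := by
      rw [hexpK, ← mul_pow]
      exact pow_le_pow_left₀ (by positivity) hkey _
    rw [hform, abs_mul, abs_of_nonneg (by positivity : (0:ℝ) ≤ b ^ (k + 1) / K ^ 2)]
    calc b ^ (k + 1) / K ^ 2
          * |Real.exp (K * w) - Real.exp (-(K * w)) - 2 * (K * w) - (K * w) ^ 3 / 3|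
        ≤ b ^ (k + 1) / K ^ 2 * (2 * (K * w) ^ 4 * Real.exp |K * w|) :=
          mul_le_mul_of_nonneg_left (sinh_taylor (K * w)) (by positivity)
      _ = 2 * K ^ 2 * w ^ 4 * (b ^ (k + 1) * Real.exp |K * w|) := by
          field_simp
      _ ≤ 2 * K ^ 2 * w ^ 4 * r ^ (k + 1) :=
          mul_le_mul_of_nonneg_left hpow (by positivity)
      _ = (2 * K ^ 2 * r ^ (k + 1)) * w ^ 4 := by ring
  have hgsum : Summable (fun k : ℕ => (2 * ((k : ℝ) + 1) ^ 2 * r ^ (k + 1)) * w ^ 4) := by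
    have := (hsum_r.mul_left 2).mul_right (w ^ 4)
    simpa [mul_assoc] using this
  have habs_sum : Summable (fun k : ℕ => |myT b w k|) :=
    Summable.of_nonneg_of_le (fun k => abs_nonneg _) hb_term hgsum
  have habs_sum' : Summable (fun k : ℕ => ‖myT b w k‖) := by
    simpa only [Real.norm_eq_abs] using habs_sum
  calc ‖∑' k : ℕ, myT b w k‖
      ≤ ∑' k : ℕ, |myT b w k| := by
        simpa only [Real.norm_eq_abs] using norm_tsum_le_tsum_norm habs_sum'
    _ ≤ ∑' k : ℕ, (2 * ((k : ℝ) + 1) ^ 2 * r ^ (k + 1)) * w ^ 4 :=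
        Summable.tsum_le_tsum hb_term habs_sum hgsum
    _ = (2 * ∑' k : ℕ, ((k : ℝ) + 1) ^ 2 * r ^ (k + 1)) * ‖w ^ 4‖ := by
        rw [tsum_mul_right, Real.norm_eq_abs, abs_of_nonneg (by positivity : (0:ℝ) ≤ w ^ 4)]
        congr 1
        rw [← tsum_mul_left]
        exact tsum_congr fun k => by ring
end
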